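/- Two oriented paths in the Cayley graph of the Heisenberg group encoded by binary words α, β ∈ {0,1}^k satisfy α(k) = β(k) (the paths are at the same vertex after k steps) if and only if ∑_{j<k} α_j = ∑_{j<k} β_j and ∑_{j<k} j·α_j = ∑_{j<k} j·β_j. -/
import Mathlib


/-- The discrete Heisenberg group realized on ℤ³. -/
structure Heis where
  x : ℤ
  y : ℤ
  z : ℤ

namespace Heis

instance : Mul Heis := ⟨fun p q => ⟨p.x + q.x, p.y + q.y, p.z + q.z + p.x * q.y⟩⟩
instance : One Heis := ⟨⟨0, 0, 0⟩⟩

/-- The generator `a`. -/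
def a : Heis := ⟨1, 0, 0⟩

/-- The generator `b`. -/
def b : Heis := ⟨0, 1, 0⟩

/-- The generator corresponding to a letter: `false ↦ a`, `true ↦ b`. -/
def gen (t : Bool) : Heis := if t then b else a

/-- The position after `k` steps of the oriented path starting at the
identity and encoded by the binary word `α` (`false` = step by `a`,
`true` = step by `b`). -/
def walk (α : ℕ → Bool) : ℕ → Heis
  | 0 => 1
  | n + 1 => walk α n * gen (α n)

/-- The numerical value of the letter `α_j` (`a ↦ 0`, `b ↦ 1`). -/
def val (α : ℕ → Bool) (j : ℕ) : ℕ := if α j then 1 else 0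

end Heis

namespace HeisAux

open Heis

noncomputable def S (α : ℕ → Bool) (k : ℕ) : ℤ := ∑ j ∈ Finset.range k, (val α j : ℤ)
noncomputable def T (α : ℕ → Bool) (k : ℕ) : ℤ := ∑ j ∈ Finset.range k, (j : ℤ) * (val α j : ℤ)

lemma mul_def (p q : Heis) : p * q = ⟨p.x + q.x, p.y + q.y, p.z + q.z + p.x * q.y⟩ := rfl

lemma walk_eq (α : ℕ → Bool) (k : ℕ) :
    (walk α k).x = k - S α k ∧ (walk α k).y = S α k ∧
      2 * (walk α k).z = 2 * T α k - S α k * (S α k - 1) := by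
  induction k with
  | zero => simp [walk, S, T]; exact ⟨rfl, rfl, rfl⟩
  | succ n ih =>
    obtain ⟨hx, hy, hz⟩ := ih
    have hS : S α (n + 1) = S α n + (val α n : ℤ) := by
      simp [S, Finset.sum_range_succ]
    have hT : T α (n + 1) = T α n + (n : ℤ) * (val α n : ℤ) := by
      simp [T, Finset.sum_range_succ]
    have hgx : (gen (α n)).x = 1 - (val α n : ℤ) := by
      cases h : α n <;> simp [gen, val, h, Heis.a, Heis.b]
    have hgy : (gen (α n)).y = (val α n : ℤ) := by
      cases h : α n <;> simp [gen, val, h, Heis.a, Heis.b]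
    have hgz : (gen (α n)).z = 0 := by
      cases h : α n <;> simp [gen, val, h, Heis.a, Heis.b]
    have hv : (val α n : ℤ) * (val α n : ℤ) = (val α n : ℤ) := by
      cases h : α n <;> simp [val, h]
    have hw : walk α (n + 1) = walk α n * gen (α n) := rfl
    rw [hw, mul_def]
    refine ⟨?_, ?_, ?_⟩
    · simp only [hx, hgx, hS]; push_cast; ring
    · simp only [hy, hgy, hS]
    · simp only [hgz, hgy, hS, hT]
      nlinarith [hz, hx, hv]

end HeisAux

/-- Two oriented paths on the Cayley graph of the Heisenberg group encoded
by binary words `α, β` are at the same vertex after `k` steps if and only if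
`∑_{j<k} α_j = ∑_{j<k} β_j` and `∑_{j<k} j·α_j = ∑_{j<k} j·β_j`. -/
theorem heisenberg_paths_meet_iff (k : ℕ) (α β : ℕ → Bool) :
    Heis.walk α k = Heis.walk β k ↔
      (∑ j ∈ Finset.range k, Heis.val α j = ∑ j ∈ Finset.range k, Heis.val β j) ∧
      (∑ j ∈ Finset.range k, j * Heis.val α j =
        ∑ j ∈ Finset.range k, j * Heis.val β j) := by
  obtain ⟨hxa, hya, hza⟩ := HeisAux.walk_eq α k
  obtain ⟨hxb, hyb, hzb⟩ := HeisAux.walk_eq β k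
  have hScast : HeisAux.S α k = HeisAux.S β k ↔
      (∑ j ∈ Finset.range k, Heis.val α j = ∑ j ∈ Finset.range k, Heis.val β j) := by
    unfold HeisAux.S
    rw [← Nat.cast_inj (R := ℤ)]
    push_cast
    rfl
  have hTcast : HeisAux.T α k = HeisAux.T β k ↔
      (∑ j ∈ Finset.range k, j * Heis.val α j = ∑ j ∈ Finset.range k, j * Heis.val β j) := by
    unfold HeisAux.T
    rw [← Nat.cast_inj (R := ℤ)]
    push_cast
    rfl
  constructor
  · intro h
    have hy : (Heis.walk α k).y = (Heis.walk β k).y := by rw [h]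
    have hz : (Heis.walk α k).z = (Heis.walk β k).z := by rw [h]
    have hS : HeisAux.S α k = HeisAux.S β k := by rw [← hya, ← hyb, hy]
    have hT : HeisAux.T α k = HeisAux.T β k := by rw [hS] at hza; linarith
    exact ⟨hScast.mp hS, hTcast.mp hT⟩
  · rintro ⟨h1, h2⟩
    have hS : HeisAux.S α k = HeisAux.S β k := hScast.mpr h1
    have hT : HeisAux.T α k = HeisAux.T β k := hTcast.mpr h2
    have hz : (Heis.walk α k).z = (Heis.walk β k).z := by rw [hS, hT] at hza; linarith
    cases' hw : Heis.walk α k with x1 y1 z1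
    cases' hw2 : Heis.walk β k with x2 y2 z2
    simp only [hw, hw2] at hxa hya hxb hyb hz
    simp_all
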